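/- Let Q = {q_1 < ... < q_k} and W = {w_1 < ... < w_k} be disjoint finite subsets of the integers ≥ 2. There exist n > max Q and a circular n-permutation σ with pinnacle set P(σ) = Q ∪ {n} and vale set V(σ) = W ∪ {1} if and only if q_j > w_j for every j in {1,...,k}. -/

import Mathlib

set_option autoImplicit false
set_option maxHeartbeats 1000000

/-- The set of pinnacle values of the circular `n`-permutation `σ`,
as a subset of `{1, …, n}` (the value at position `i` is `σ i + 1`). -/
def pinnacleSet (n : ℕ) (σ : Equiv.Perm (Fin n)) : Finset ℕ :=
  (Finset.univ.filter fun i : Fin n =>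
      σ ((finRotate n).symm i) < σ i ∧ σ (finRotate n i) < σ i).image
    fun i => (σ i : ℕ) + 1

/-- The set of vale values of the circular `n`-permutation `σ`, as a subset of `{1, …, n}`. -/
def valeSet (n : ℕ) (σ : Equiv.Perm (Fin n)) : Finset ℕ :=
  (Finset.univ.filter fun i : Fin n =>
      σ i < σ ((finRotate n).symm i) ∧ σ i < σ (finRotate n i)).image
    fun i => (σ i : ℕ) + 1


def IsPin (f : ℕ → ℕ) (e : ℕ) : Prop := f (e-1) < f e ∧ f (e+1) < f e
def IsVal (f : ℕ → ℕ) (e : ℕ) : Prop := f e < f (e-1) ∧ f e < f (e+1)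

instance (f : ℕ → ℕ) : DecidablePred (IsPin f) := fun _ => inferInstanceAs (Decidable (_ ∧ _))
instance (f : ℕ → ℕ) : DecidablePred (IsVal f) := fun _ => inferInstanceAs (Decidable (_ ∧ _))

lemma right_walk (f : ℕ → ℕ) (n : ℕ) (hn : 2 ≤ n) (hper : f n = f 0)
    (hmax : ∀ e, 0 < e → e < n → f e < f 0)
    (hinj : ∀ a b, a < n → b < n → f a = f b → a = b)
    (p : ℕ) (hp0 : 0 < p) (hpn : p < n) (hp : IsPin f p) (hlt : f p < f 0) :
    ∃ v, p < v ∧ v < n ∧ IsVal f v ∧ f v < f p ∧ ∀ x, p ≤ x → x < v → f (x+1) < f x := by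
  obtain ⟨hpl, hpr⟩ := hp
  -- p + 1 < n
  have hp1n : p + 1 < n := by
    rcases Nat.lt_or_ge (p+1) n with h | h
    · exact h
    · exfalso
      have : p + 1 = n := by omega
      rw [this, hper] at hpr; omega
  have hex : ∃ m, f (p + m) < f (p + m + 1) := by
    refine ⟨n - 1 - p, ?_⟩
    have h1 : p + (n - 1 - p) = n - 1 := by omega
    have h2 : p + (n - 1 - p) + 1 = n := by omega
    rw [h1]
    have h3 : n - 1 + 1 = n := by omega
    rw [h3, hper]
    exact hmax (n-1) (by omega) (by omega)
  set m₀ := Nat.find hex with hm₀def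
  have hm₀ : f (p + m₀) < f (p + m₀ + 1) := Nat.find_spec hex
  have hm₀le : m₀ ≤ n - 1 - p := Nat.find_le (by
    have h1 : p + (n - 1 - p) = n - 1 := by omega
    have h2 : p + (n - 1 - p) + 1 = n := by omega
    rw [h1]
    have h3 : n - 1 + 1 = n := by omega
    rw [h3, hper]
    exact hmax (n-1) (by omega) (by omega))
  have hm₀pos : 0 < m₀ := by
    rcases Nat.eq_zero_or_pos m₀ with h | h
    · exfalso; rw [h] at hm₀; simp at hm₀; omega
    · exact h
  have hdesc : ∀ i, i < m₀ → f (p + i + 1) < f (p + i) := by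
    intro i hi
    have hni : ¬ f (p + i) < f (p + i + 1) := Nat.find_min hex hi
    have hne : f (p + i + 1) ≠ f (p + i) := by
      intro h
      have := hinj _ _ (by omega) (by omega) h
      omega
    omega
  have hchain : ∀ i, i ≤ m₀ → f (p + i) + i ≤ f p := by
    intro i
    induction i with
    | zero => simp
    | succ j ih =>
      intro hj
      have h1 := ih (by omega)
      have h2 := hdesc j (by omega)
      have he2 : p + (j + 1) = p + j + 1 := by omega
      rw [he2]
      omega
  refine ⟨p + m₀, by omega, by omega, ⟨?_, ?_⟩, ?_, ?_⟩
  · have := hdesc (m₀ - 1) (by omega)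
    have he : p + (m₀ - 1) + 1 = p + m₀ := by omega
    have he2 : p + m₀ - 1 = p + (m₀ - 1) := by omega
    rw [he] at this; rw [he2]; exact this
  · exact hm₀
  · have := hchain m₀ le_rfl; omega
  · intro x hx1 hx2
    have := hdesc (x - p) (by omega)
    have he : p + (x - p) = x := by omega
    rw [he] at this; exact this

lemma left_walk (f : ℕ → ℕ) (n : ℕ) (hn : 2 ≤ n) (hper : f n = f 0)
    (hmax : ∀ e, 0 < e → e < n → f e < f 0)
    (hinj : ∀ a b, a < n → b < n → f a = f b → a = b)
    (p : ℕ) (hp0 : 0 < p) (hpn : p < n) (hp : IsPin f p) (hlt : f p < f 0) :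
    ∃ u, 0 < u ∧ u < p ∧ IsVal f u ∧ f u < f p := by
  obtain ⟨hpl, hpr⟩ := hp
  have hp2 : 2 ≤ p := by
    rcases Nat.lt_or_ge p 2 with h | h
    · exfalso
      have : p = 1 := by omega
      rw [this] at hpl hlt; simp at hpl; omega
    · exact h
  have hex : ∃ m, f (p - m) < f (p - m - 1) := by
    refine ⟨p - 1, ?_⟩
    have h1 : p - (p - 1) = 1 := by omega
    rw [h1]
    simpa using hmax 1 (by omega) (by omega)
  set m₀ := Nat.find hex with hm₀def
  have hm₀ : f (p - m₀) < f (p - m₀ - 1) := Nat.find_spec hex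
  have hm₀le : m₀ ≤ p - 1 := Nat.find_le (by
    have h1 : p - (p - 1) = 1 := by omega
    rw [h1]
    simpa using hmax 1 (by omega) (by omega))
  have hm₀pos : 0 < m₀ := by
    rcases Nat.eq_zero_or_pos m₀ with h | h
    · exfalso; rw [h] at hm₀; simp at hm₀; omega
    · exact h
  have hdesc : ∀ i, i < m₀ → f (p - i - 1) < f (p - i) := by
    intro i hi
    have hni : ¬ f (p - i) < f (p - i - 1) := Nat.find_min hex hi
    have hne : f (p - i - 1) ≠ f (p - i) := by
      intro h
      have := hinj _ _ (by omega) (by omega) h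
      omega
    omega
  have hchain : ∀ i, i ≤ m₀ → f (p - i) + i ≤ f p := by
    intro i
    induction i with
    | zero => simp
    | succ j ih =>
      intro hj
      have h1 := ih (by omega)
      have h2 := hdesc j (by omega)
      have he : p - j - 1 = p - (j+1) := by omega
      rw [he] at h2
      omega
  refine ⟨p - m₀, by omega, by omega, ⟨?_, ?_⟩, ?_⟩
  · exact hm₀
  · have := hdesc (m₀ - 1) (by omega)
    have he : p - (m₀ - 1) - 1 = p - m₀ := by omega
    have he2 : p - m₀ + 1 = p - (m₀ - 1) := by omega
    rw [he] at this; rw [he2]; exact this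
  · have := hchain m₀ le_rfl; omega

lemma core_count (f : ℕ → ℕ) (n : ℕ) (hn : 2 ≤ n) (hper : f n = f 0)
    (hmax : ∀ e, 0 < e → e < n → f e < f 0)
    (hinj : ∀ a b, a < n → b < n → f a = f b → a = b)
    (t : ℕ) (ht : t < f 0)
    (hex : ∃ e, e < n ∧ IsVal f e ∧ f e < t) :
    ((Finset.range n).filter (fun e => IsPin f e ∧ f e ≤ t)).card + 1
      ≤ ((Finset.range n).filter (fun e => IsVal f e ∧ f e < t)).card := by
  classical
  set Pt := (Finset.range n).filter (fun e => IsPin f e ∧ f e ≤ t) with hPt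
  set Vt := (Finset.range n).filter (fun e => IsVal f e ∧ f e < t) with hVt
  set v₀ := Nat.find hex with hv₀def
  obtain ⟨hv₀n, hv₀val, hv₀t⟩ := Nat.find_spec hex
  have hv₀mem : v₀ ∈ Vt := by
    rw [hVt, Finset.mem_filter, Finset.mem_range]; exact ⟨hv₀n, hv₀val, hv₀t⟩
  have hPtfacts : ∀ p ∈ Pt, 0 < p ∧ p < n ∧ IsPin f p ∧ f p < f 0 := by
    intro p hp
    rw [hPt, Finset.mem_filter, Finset.mem_range] at hp
    obtain ⟨hpn, hpin, hpt⟩ := hp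
    have hp0 : 0 < p := by
      rcases Nat.eq_zero_or_pos p with h | h
      · exfalso; obtain ⟨h1, _⟩ := hpin; rw [h] at h1; simp at h1
      · exact h
    exact ⟨hp0, hpn, hpin, by omega⟩
  have key : ∀ p, p ∈ Pt → ∃ v, p < v ∧ v < n ∧ IsVal f v ∧ f v < f p ∧
      ∀ x, p ≤ x → x < v → f (x+1) < f x := by
    intro p hp
    obtain ⟨h1, h2, h3, h4⟩ := hPtfacts p hp
    exact right_walk f n hn hper hmax hinj p h1 h2 h3 h4
  choose! F hF using key
  have hmaps : ∀ p ∈ Pt, F p ∈ Vt.erase v₀ := by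
    intro p hp
    obtain ⟨hlt', hltn, hval, hvlt, hdesc⟩ := hF p hp
    have hpt : f p ≤ t := by
      rw [hPt, Finset.mem_filter] at hp; exact hp.2.2
    rw [Finset.mem_erase]
    constructor
    · intro hcon
      obtain ⟨h1, h2, h3, h4⟩ := hPtfacts p hp
      obtain ⟨u, hu0, hup, huval, hulf⟩ := left_walk f n hn hper hmax hinj p h1 h2 h3 h4
      have hut : f u < t := by omega
      have h5 : u < F p := by omega
      rw [hcon] at h5
      exact Nat.find_min hex h5 ⟨by omega, huval, hut⟩
    · rw [hVt, Finset.mem_filter, Finset.mem_range]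
      exact ⟨hltn, hval, by omega⟩
  have hinjF : ∀ p p', p ∈ Pt → p' ∈ Pt → p < p' → F p ≠ F p' := by
    intro p p' hp hp' hlt' heq
    obtain ⟨_, _, hvalv, _, hdesc⟩ := hF p hp
    obtain ⟨hlt2, _, _, _, _⟩ := hF p' hp'
    obtain ⟨_, _, hpin', _⟩ := hPtfacts p' hp'
    have hx := hdesc (p' - 1) (by omega) (by rw [heq]; omega)
    have he : p' - 1 + 1 = p' := by
      obtain ⟨h0', _, _, _⟩ := hPtfacts p' hp'
      omega
    rw [he] at hx
    exact absurd hpin'.1 (by omega)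
  have hcard : Pt.card ≤ (Vt.erase v₀).card := by
    apply Finset.card_le_card_of_injOn F hmaps
    intro p hp p' hp' heq
    simp only [Finset.coe_sort_coe, Finset.mem_coe] at hp hp'
    rcases lt_trichotomy p p' with h | h | h
    · exact absurd heq (hinjF p p' hp hp' h)
    · exact h
    · exact absurd heq.symm (hinjF p' p hp' hp h)
  have := Finset.card_erase_of_mem hv₀mem
  have hpos : 0 < Vt.card := Finset.card_pos.mpr ⟨v₀, hv₀mem⟩
  omega

def embFun (s : Finset ℕ) (k : ℕ) (h : s.card = k) : ℕ → ℕ :=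
  fun ι => if hh : ι < k then s.orderEmbOfFin h ⟨ι, hh⟩ else 0

lemma embFun_mem (s : Finset ℕ) (k : ℕ) (h : s.card = k) {ι : ℕ} (hι : ι < k) :
    embFun s k h ι ∈ s := by
  unfold embFun; rw [dif_pos hι]; exact Finset.orderEmbOfFin_mem s h _

lemma embFun_lt (s : Finset ℕ) (k : ℕ) (h : s.card = k) {ι ι' : ℕ}
    (h1 : ι < ι') (h2 : ι' < k) : embFun s k h ι < embFun s k h ι' := by
  unfold embFun
  rw [dif_pos (lt_trans h1 h2), dif_pos h2]
  exact (s.orderEmbOfFin h).strictMono (Fin.mk_lt_mk.mpr h1)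

lemma embFun_inj (s : Finset ℕ) (k : ℕ) (h : s.card = k) {ι ι' : ℕ}
    (h1 : ι < k) (h2 : ι' < k) (he : embFun s k h ι = embFun s k h ι') : ι = ι' := by
  rcases lt_trichotomy ι ι' with hc | hc | hc
  · exact absurd he (ne_of_lt (embFun_lt s k h hc h2))
  · exact hc
  · exact absurd he.symm (ne_of_lt (embFun_lt s k h hc h1))

lemma embFun_surj (s : Finset ℕ) (k : ℕ) (h : s.card = k) {a : ℕ} (ha : a ∈ s) :
    ∃ ι, ι < k ∧ embFun s k h ι = a := by
  have : a ∈ Set.range (s.orderEmbOfFin h) := by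
    rw [Finset.range_orderEmbOfFin]; exact ha
  obtain ⟨ι, hι⟩ := this
  refine ⟨ι.val, ι.isLt, ?_⟩
  unfold embFun
  rw [dif_pos ι.isLt, ← hι]

lemma embFun_fin (s : Finset ℕ) (k : ℕ) (h : s.card = k) (j : Fin k) :
    embFun s k h j.val = s.orderEmbOfFin h j := by
  unfold embFun
  rw [dif_pos j.isLt]

open Fin.NatCast Fin.CommRing in
lemma forward (k : ℕ) (Q W : Finset ℕ)
    (hQW : Disjoint Q W) (hQ2 : ∀ q ∈ Q, 2 ≤ q) (hW2 : ∀ w ∈ W, 2 ≤ w)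
    (hQk : Q.card = k) (hWk : W.card = k)
    (n : ℕ) (hq : ∀ q ∈ Q, q < n) (σ : Equiv.Perm (Fin n))
    (hP : pinnacleSet n σ = Q ∪ {n}) (hV : valeSet n σ = W ∪ {1})
    (j : Fin k) : W.orderEmbOfFin hWk j < Q.orderEmbOfFin hQk j := by
  classical
  have hjk : j.val < k := j.isLt
  set qj := Q.orderEmbOfFin hQk j with hqjdef
  have hqjQ : qj ∈ Q := Finset.orderEmbOfFin_mem Q hQk j
  have hqj2 : 2 ≤ qj := hQ2 qj hqjQ
  have hqjn : qj < n := hq qj hqjQ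
  have hn3 : 3 ≤ n := by omega
  obtain ⟨m, rfl⟩ : ∃ m, n = m + 1 := ⟨n - 1, by omega⟩
  have hm2 : 2 ≤ m := by omega
  set M := σ.symm (Fin.last m) with hMdef
  set f : ℕ → ℕ := fun e => ((σ (M + (e : Fin (m+1)))) : ℕ) with hfdef
  have hf0 : f 0 = m := by
    simp only [hfdef, Nat.cast_zero, add_zero, hMdef, Equiv.apply_symm_apply, Fin.val_last]
  have hper : f (m+1) = f 0 := by
    simp only [hfdef, Fin.natCast_self, Nat.cast_zero]
  have hinj' : ∀ a b, a < m+1 → b < m+1 → f a = f b → a = b := by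
    intro a b ha hb hab
    simp only [hfdef] at hab
    have h1 : σ (M + (a : Fin (m+1))) = σ (M + (b : Fin (m+1))) := Fin.ext hab
    have h2 : (a : Fin (m+1)) = (b : Fin (m+1))  := by
      have := σ.injective h1
      exact add_left_cancel this
    have := congrArg Fin.val h2
    rwa [Fin.val_cast_of_lt ha, Fin.val_cast_of_lt hb] at this
  have hmax : ∀ e, 0 < e → e < m+1 → f e < f 0 := by
    intro e he hen
    have hle : f e ≤ m := by
      simp only [hfdef]
      exact Nat.lt_succ_iff.mp (Fin.is_lt _)
    have hne : f e ≠ m := by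
      intro hcon
      have : f e = f 0 := by rw [hcon, hf0]
      have := hinj' e 0 hen (by omega) this
      omega
    rw [hf0]; omega
  -- rotation lemmas
  have hrot : ∀ i : Fin (m+1), finRotate (m+1) i = i + 1 := finRotate_succ_apply
  have hrotsymm : ∀ i : Fin (m+1), (finRotate (m+1)).symm i = i - 1 := by
    intro i; rw [Equiv.symm_apply_eq, finRotate_succ_apply, sub_add_cancel]
  have hstep : ∀ e : ℕ, ((e+1 : ℕ) : Fin (m+1)) = ((e : ℕ) : Fin (m+1)) + 1 := by
    intro e; push_cast; ring
  have hcast : ∀ e : ℕ, 0 < e → ((e-1 : ℕ) : Fin (m+1)) = ((e : ℕ) : Fin (m+1)) - 1 := by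
    intro e he
    rw [eq_sub_iff_add_eq, ← hstep (e-1)]
    congr 1; omega
  have h1 : ∀ e : ℕ, M + (e : Fin (m+1)) + 1 = M + ((e+1 : ℕ) : Fin (m+1)) := by
    intro e; rw [hstep]; ring
  have h2 : ∀ e : ℕ, 0 < e → M + (e : Fin (m+1)) - 1 = M + ((e-1 : ℕ) : Fin (m+1)) := by
    intro e he; rw [hcast e he]; ring
  have trans_pin : ∀ e : ℕ, 0 < e →
      ((σ ((finRotate (m+1)).symm (M + (e : Fin (m+1)))) < σ (M + (e : Fin (m+1))) ∧
        σ (finRotate (m+1) (M + (e : Fin (m+1)))) < σ (M + (e : Fin (m+1)))) ↔ IsPin f e) := by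
    intro e he
    rw [hrot, hrotsymm, h1 e, h2 e he]
    exact Iff.rfl
  have trans_val : ∀ e : ℕ, 0 < e →
      ((σ (M + (e : Fin (m+1))) < σ ((finRotate (m+1)).symm (M + (e : Fin (m+1)))) ∧
        σ (M + (e : Fin (m+1))) < σ (finRotate (m+1) (M + (e : Fin (m+1))))) ↔ IsVal f e) := by
    intro e he
    rw [hrot, hrotsymm, h1 e, h2 e he]
    exact Iff.rfl
  -- from a member of pinnacleSet, get an offset
  have hPmem : ∀ a ∈ Q, ∃ e, 0 < e ∧ e < m+1 ∧ IsPin f e ∧ f e + 1 = a := by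
    intro a ha
    have haP : a ∈ pinnacleSet (m+1) σ := by rw [hP]; exact Finset.mem_union_left _ ha
    simp only [pinnacleSet, Finset.mem_image, Finset.mem_filter, Finset.mem_univ,
      true_and] at haP
    obtain ⟨i, hcond, hval⟩ := haP
    set e : ℕ := ((i - M : Fin (m+1)) : ℕ) with hedef
    have hie : M + (e : Fin (m+1)) = i := by
      rw [hedef, Fin.cast_val_eq_self]
      ring
    have hfe : f e = (σ i : ℕ) := by rw [hfdef]; simp only [hie]
    have han : a < m + 1 := by
      have := hq a ha; exact this
    have he0 : 0 < e := by
      rcases Nat.eq_zero_or_pos e with h | h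
      · exfalso
        have : f e = f 0 := by rw [h]
        rw [hfe, hf0] at this
        have ha2 := hQ2 a ha
        omega
      · exact h
    refine ⟨e, he0, Fin.is_lt _, ?_, by omega⟩
    rw [← trans_pin e he0, hie]
    exact hcond
  have hVmem : ∀ a ∈ valeSet (m+1) σ, ∃ e, 0 < e ∧ e < m+1 ∧ IsVal f e ∧ f e + 1 = a := by
    intro a ha
    simp only [valeSet, Finset.mem_image, Finset.mem_filter, Finset.mem_univ,
      true_and] at ha
    obtain ⟨i, hcond, hval⟩ := ha
    set e : ℕ := ((i - M : Fin (m+1)) : ℕ) with hedef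
    have hie : M + (e : Fin (m+1)) = i := by
      rw [hedef, Fin.cast_val_eq_self]
      ring
    have hfe : f e = (σ i : ℕ) := by rw [hfdef]; simp only [hie]
    have he0 : 0 < e := by
      rcases Nat.eq_zero_or_pos e with h | h
      · exfalso
        have hf' : f e = f 0 := by rw [h]
        rw [hfe, hf0] at hf'
        -- σ i = m means i = M, but then i would be max, and vale cond gives σ something < σ i... 
        have hi : i = M := by
          apply σ.injective
          rw [hMdef, Equiv.apply_symm_apply]
          exact Fin.ext (by simpa using hf')
        obtain ⟨hc1, _⟩ := hcond
        rw [Fin.lt_def] at hc1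
        have : ((σ ((finRotate (m+1)).symm i)) : ℕ) < m + 1 := Fin.is_lt _
        rw [hf'] at hc1
        omega
      · exact h
    refine ⟨e, he0, Fin.is_lt _, ?_, by omega⟩
    rw [← trans_val e he0, hie]
    exact hcond
  -- converse: offsets give vale memberships
  have hVmem' : ∀ e, 0 < e → e < m+1 → IsVal f e → f e + 1 ∈ W ∪ {1} := by
    intro e he0 hen hval
    rw [← hV]
    simp only [valeSet, Finset.mem_image, Finset.mem_filter, Finset.mem_univ, true_and]
    exact ⟨M + (e : Fin (m+1)), (trans_val e he0).mpr hval, rfl⟩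
  set t := qj - 1 with htdef
  have ht : t < f 0 := by rw [hf0]; omega
  set Pt := (Finset.range (m+1)).filter (fun e => IsPin f e ∧ f e ≤ t) with hPtdef
  set Vt := (Finset.range (m+1)).filter (fun e => IsVal f e ∧ f e < t) with hVtdef
  -- |Pt| ≥ j+1
  have hqj' : embFun Q k hQk j.val = qj := by rw [embFun_fin Q k hQk j, hqjdef]
  have key2 : ∀ ι, ι < j.val + 1 → ∃ e, e ∈ Pt ∧ f e + 1 = embFun Q k hQk ι := by
    intro ι hι
    set a := embFun Q k hQk ι with hadef
    have haQ : a ∈ Q := embFun_mem Q k hQk (by omega)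
    have haqj : a ≤ qj := by
      rcases Nat.lt_or_ge ι j.val with h | h
      · have := embFun_lt Q k hQk h hjk
        rw [hqj'] at this; omega
      · have : ι = j.val := by omega
        rw [hadef, this, hqj']
    obtain ⟨e, he0, hen, hpin, hfa⟩ := hPmem a haQ
    refine ⟨e, ?_, hfa⟩
    rw [hPtdef, Finset.mem_filter, Finset.mem_range]
    have ha2 := hQ2 a haQ
    exact ⟨hen, hpin, by omega⟩
  have hPtcard : j.val + 1 ≤ Pt.card := by
    choose! g hg using key2
    have := Finset.card_le_card_of_injOn g
      (fun ι hι => (hg ι (Finset.mem_range.mp hι)).1)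
      (by
        intro ι hι ι' hι' heq
        simp only [Finset.coe_sort_coe, Finset.mem_coe, Finset.mem_range] at hι hι'
        have e1 := (hg ι (by simpa using hι)).2
        have e2 := (hg ι' (by simpa using hι')).2
        rw [heq] at e1
        exact embFun_inj Q k hQk (by omega) (by omega) (by omega))
    simpa using this
  -- |Vt| ≤ |W.filter (< qj)| + 1
  have hVtcard : Vt.card ≤ (W.filter (· < qj)).card + 1 := by
    have hsub : ∀ e ∈ Vt, f e + 1 ∈ (W.filter (· < qj)) ∪ {1} := by
      intro e he
      rw [hVtdef, Finset.mem_filter, Finset.mem_range] at he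
      obtain ⟨hen, hval, hft⟩ := he
      have he0 : 0 < e := by
        rcases Nat.eq_zero_or_pos e with h | h
        · exfalso; obtain ⟨hh, _⟩ := hval; rw [h] at hh; simp at hh
        · exact h
      have := hVmem' e he0 hen hval
      rw [Finset.mem_union] at this ⊢
      rcases this with h | h
      · left; rw [Finset.mem_filter]; exact ⟨h, by omega⟩
      · right; exact h
    have hinjOn : Set.InjOn (fun e => f e + 1) Vt := by
      intro a ha b hb hab
      simp only [Finset.mem_coe, hVtdef, Finset.mem_filter, Finset.mem_range] at ha hb
      apply hinj' a b ha.1 hb.1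
      simpa using hab
    have := Finset.card_le_card_of_injOn _ hsub hinjOn
    calc Vt.card ≤ ((W.filter (· < qj)) ∪ {1}).card := this
      _ ≤ (W.filter (· < qj)).card + ({1} : Finset ℕ).card := Finset.card_union_le _ _
      _ = (W.filter (· < qj)).card + 1 := by simp
  -- existence of a small vale
  have hex : ∃ e, e < m+1 ∧ IsVal f e ∧ f e < t := by
    have h1V : (1 : ℕ) ∈ valeSet (m+1) σ := by
      rw [hV]; exact Finset.mem_union_right _ (Finset.mem_singleton_self 1)
    obtain ⟨e, he0, hen, hval, hfe⟩ := hVmem 1 h1V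
    exact ⟨e, hen, hval, by omega⟩
  have hcore := core_count f (m+1) (by omega) hper hmax hinj' t ht hex
  rw [← hPtdef, ← hVtdef] at hcore
  have hWcount : j.val + 1 ≤ (W.filter (· < qj)).card := by omega
  -- conclude
  by_contra hcon
  push_neg at hcon
  -- qj ≤ wj
  have hwj' : embFun W k hWk j.val = W.orderEmbOfFin hWk j := embFun_fin W k hWk j
  have hkey : ∀ a ∈ W.filter (· < qj), ∃ ι, ι < j.val ∧ embFun W k hWk ι = a := by
    intro a ha
    rw [Finset.mem_filter] at ha
    obtain ⟨haW, haqj⟩ := ha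
    obtain ⟨ι, hιk, hιa⟩ := embFun_surj W k hWk haW
    refine ⟨ι, ?_, hιa⟩
    by_contra hcon2
    push_neg at hcon2
    have hle : W.orderEmbOfFin hWk j ≤ a := by
      rcases Nat.lt_or_ge j.val ι with h | h
      · have := embFun_lt W k hWk h hιk
        rw [hwj'] at this; omega
      · have : ι = j.val := by omega
        rw [← hιa, this, hwj']
    omega
  choose! gg hgg using hkey
  have := Finset.card_le_card_of_injOn gg
    (fun a ha => Finset.mem_range.mpr (hgg a ha).1)
    (by
      intro a ha b hb heq
      simp only [Finset.mem_coe] at ha hb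
      have e1 := (hgg a ha).2
      have e2 := (hgg b hb).2
      rw [heq] at e1
      omega)
  rw [Finset.card_range] at this
  omega

def gfun (qv wv rv : ℕ → ℕ) (k n : ℕ) : ℕ → ℕ := fun i =>
  if i = 0 then 0
  else if i ≤ 2*k then (if i % 2 = 1 then qv ((i-1)/2) else wv (i/2 - 1))
  else if i = 2*k+1 then n - 1
  else rv (i - (2*k+2))

lemma gfun_zero (qv wv rv : ℕ → ℕ) (k n : ℕ) : gfun qv wv rv k n 0 = 0 := by
  simp [gfun]

lemma gfun_q (qv wv rv : ℕ → ℕ) (k n : ℕ) {j : ℕ} (hj : j < k) :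
    gfun qv wv rv k n (2*j+1) = qv j := by
  unfold gfun
  rw [if_neg (by omega), if_pos (by omega), if_pos (by omega)]
  congr 1
  omega

lemma gfun_w (qv wv rv : ℕ → ℕ) (k n : ℕ) {j : ℕ} (hj : j < k) :
    gfun qv wv rv k n (2*j+2) = wv j := by
  unfold gfun
  rw [if_neg (by omega), if_pos (by omega), if_neg (by omega)]
  congr 1
  omega

lemma gfun_top (qv wv rv : ℕ → ℕ) (k n : ℕ) :
    gfun qv wv rv k n (2*k+1) = n - 1 := by
  unfold gfun
  rw [if_neg (by omega), if_neg (by omega), if_pos rfl]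

lemma gfun_r (qv wv rv : ℕ → ℕ) (k n : ℕ) {i : ℕ} (hi : 2*k+2 ≤ i) :
    gfun qv wv rv k n i = rv (i - (2*k+2)) := by
  unfold gfun
  rw [if_neg (by omega), if_neg (by omega), if_neg (by omega)]

lemma construction (k : ℕ) (Q W : Finset ℕ)
    (hQW : Disjoint Q W) (hQ2 : ∀ q ∈ Q, 2 ≤ q) (hW2 : ∀ w ∈ W, 2 ≤ w)
    (hQk : Q.card = k) (hWk : W.card = k)
    (hlt : ∀ ι, ι < k → embFun W k hWk ι < embFun Q k hQk ι)
    (m : ℕ) (hm : 1 ≤ m) (hQm : ∀ q ∈ Q, q ≤ m) (hWm : ∀ w ∈ W, w ≤ m) :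
    ∃ σ : Equiv.Perm (Fin (m+1)),
      pinnacleSet (m+1) σ = Q ∪ {m+1} ∧ valeSet (m+1) σ = W ∪ {1} := by
  classical
  -- the leftover set R
  set U : Finset ℕ := (Q.image (· - 1)) ∪ (W.image (· - 1)) ∪ {0, m} with hUdef
  set R : Finset ℕ := (Finset.range (m+1)) \ U with hRdef
  set c : ℕ := R.card with hcdef
  have hRc : R.card = c := rfl
  -- basic membership facts
  have hQim : ∀ x, x ∈ Q.image (· - 1) ↔ x + 1 ∈ Q := by
    intro x
    simp only [Finset.mem_image]
    constructor
    · rintro ⟨q, hq, rfl⟩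
      have := hQ2 q hq
      have hx : q - 1 + 1 = q := by omega
      rwa [hx]
    · intro hx
      exact ⟨x + 1, hx, by omega⟩
  have hWim : ∀ x, x ∈ W.image (· - 1) ↔ x + 1 ∈ W := by
    intro x
    simp only [Finset.mem_image]
    constructor
    · rintro ⟨w, hw, rfl⟩
      have := hW2 w hw
      have hx : w - 1 + 1 = w := by omega
      rwa [hx]
    · intro hx
      exact ⟨x + 1, hx, by omega⟩
  -- cardinality of U
  have hcQ : (Q.image (· - 1)).card = k := by
    rw [Finset.card_image_of_injOn, hQk]
    intro a ha b hb hab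
    have := hQ2 a ha; have := hQ2 b hb
    simp only at hab
    omega
  have hcW : (W.image (· - 1)).card = k := by
    rw [Finset.card_image_of_injOn, hWk]
    intro a ha b hb hab
    have := hW2 a ha; have := hW2 b hb
    simp only at hab
    omega
  have hdisj1 : Disjoint (Q.image (· - 1)) (W.image (· - 1)) := by
    rw [Finset.disjoint_left]
    intro x hx hx'
    rw [hQim] at hx; rw [hWim] at hx'
    exact (Finset.disjoint_left.mp hQW hx) hx'
  have hdisj2 : Disjoint ((Q.image (· - 1)) ∪ (W.image (· - 1))) ({0, m} : Finset ℕ) := by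
    rw [Finset.disjoint_left]
    intro x hx hx'
    rw [Finset.mem_union] at hx
    rw [Finset.mem_insert, Finset.mem_singleton] at hx'
    rcases hx with h | h
    · rw [hQim] at h
      have h2 := hQ2 _ h
      have h3 := hQm _ h
      omega
    · rw [hWim] at h
      have h2 := hW2 _ h
      have h3 := hWm _ h
      omega
  have hcU : U.card = 2*k + 2 := by
    rw [hUdef, Finset.card_union_of_disjoint hdisj2, Finset.card_union_of_disjoint hdisj1,
      hcQ, hcW, Finset.card_pair (by omega : (0:ℕ) ≠ m)]
    omega
  have hUsub : U ⊆ Finset.range (m+1) := by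
    intro x hx
    rw [hUdef, Finset.mem_union, Finset.mem_union] at hx
    rw [Finset.mem_range]
    rcases hx with (h | h) | h
    · rw [hQim] at h; have := hQm _ h; omega
    · rw [hWim] at h; have := hWm _ h; omega
    · rw [Finset.mem_insert, Finset.mem_singleton] at h; omega
  have hcard : m + 1 = 2*k + 2 + c := by
    have h1 : R.card = (m+1) - U.card := by
      rw [hRdef, Finset.card_sdiff_of_subset hUsub, Finset.card_range]
    have h2 : U.card ≤ m + 1 := by
      calc U.card ≤ (Finset.range (m+1)).card := Finset.card_le_card hUsub
        _ = m + 1 := Finset.card_range _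
    rw [hcU] at h1 h2
    omega
  -- value functions
  set qv : ℕ → ℕ := fun ι => embFun Q k hQk ι - 1 with hqvdef
  set wv : ℕ → ℕ := fun ι => embFun W k hWk ι - 1 with hwvdef
  set rv : ℕ → ℕ := fun ι => embFun R c hRc (c - 1 - ι) with hrvdef
  have hqvf : ∀ ι, ι < k → 1 ≤ qv ι ∧ qv ι ≤ m - 1 ∧ qv ι + 1 ∈ Q := by
    intro ι hι
    have h1 := embFun_mem Q k hQk hι
    have h2 := hQ2 _ h1
    have h3 := hQm _ h1
    refine ⟨by rw [hqvdef]; simp only; omega, by rw [hqvdef]; simp only; omega, ?_⟩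
    rw [hqvdef]; simp only
    have : embFun Q k hQk ι - 1 + 1 = embFun Q k hQk ι := by omega
    rwa [this]
  have hwvf : ∀ ι, ι < k → 1 ≤ wv ι ∧ wv ι ≤ m - 1 ∧ wv ι + 1 ∈ W := by
    intro ι hι
    have h1 := embFun_mem W k hWk hι
    have h2 := hW2 _ h1
    have h3 := hWm _ h1
    refine ⟨by rw [hwvdef]; simp only; omega, by rw [hwvdef]; simp only; omega, ?_⟩
    rw [hwvdef]; simp only
    have : embFun W k hWk ι - 1 + 1 = embFun W k hWk ι := by omega
    rwa [this]
  have hwq : ∀ ι, ι < k → wv ι < qv ι := by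
    intro ι hι
    have h1 := hlt ι hι
    have h2 := hW2 _ (embFun_mem W k hWk hι)
    rw [hqvdef, hwvdef]; simp only
    omega
  have hqmono : ∀ ι ι', ι < ι' → ι' < k → qv ι < qv ι' := by
    intro ι ι' h1 h2
    have := embFun_lt Q k hQk h1 h2
    have h3 := hQ2 _ (embFun_mem Q k hQk (lt_trans h1 h2))
    rw [hqvdef]; simp only
    omega
  have hwmono : ∀ ι ι', ι < ι' → ι' < k → wv ι < wv ι' := by
    intro ι ι' h1 h2
    have := embFun_lt W k hWk h1 h2
    have h3 := hW2 _ (embFun_mem W k hWk (lt_trans h1 h2))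
    rw [hwvdef]; simp only
    omega
  have hrvf : ∀ ι, ι < c → 1 ≤ rv ι ∧ rv ι ≤ m - 1 ∧ rv ι + 1 ∉ Q ∧ rv ι + 1 ∉ W := by
    intro ι hι
    have h1 : rv ι ∈ R := by
      rw [hrvdef]; simp only
      exact embFun_mem R c hRc (by omega)
    rw [hRdef, Finset.mem_sdiff, Finset.mem_range, hUdef] at h1
    obtain ⟨hr1, hr2⟩ := h1
    rw [Finset.mem_union, Finset.mem_union] at hr2
    push_neg at hr2
    obtain ⟨⟨hna, hnb⟩, hnc⟩ := hr2
    rw [hQim] at hna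
    rw [hWim] at hnb
    rw [Finset.mem_insert, Finset.mem_singleton] at hnc
    push_neg at hnc
    exact ⟨by omega, by omega, hna, hnb⟩
  have hranti : ∀ ι ι', ι < ι' → ι' < c → rv ι' < rv ι := by
    intro ι ι' h1 h2
    rw [hrvdef]; simp only
    exact embFun_lt R c hRc (by omega) (by omega)
  -- the value assignment
  set g : ℕ → ℕ := gfun qv wv rv k (m+1) with hgdef
  have hg0 : g 0 = 0 := gfun_zero qv wv rv k (m+1)
  have hgq : ∀ j', j' < k → g (2*j'+1) = qv j' := fun j' hj => gfun_q qv wv rv k (m+1) hj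
  have hgw : ∀ j', j' < k → g (2*j'+2) = wv j' := fun j' hj => gfun_w qv wv rv k (m+1) hj
  have hgtop : g (2*k+1) = m := by
    have := gfun_top qv wv rv k (m+1)
    simpa using this
  have hgr : ∀ m', m' < c → g (2*k+2+m') = rv m' := by
    intro m' hm'
    have := gfun_r qv wv rv k (m+1) (show 2*k+2 ≤ 2*k+2+m' by omega)
    have h2 : 2*k+2+m' - (2*k+2) = m' := by omega
    rw [h2] at this
    exact this
  -- form of indices
  have hform : ∀ i, i < m+1 → i = 0 ∨ (∃ j', j' < k ∧ i = 2*j'+1) ∨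
      (∃ j', j' < k ∧ i = 2*j'+2) ∨ i = 2*k+1 ∨ (∃ m', m' < c ∧ i = 2*k+2+m') := by
    intro i hi
    rcases Nat.eq_zero_or_pos i with h | h
    · left; exact h
    rcases Nat.lt_or_ge i (2*k+1) with h2 | h2
    · rcases Nat.even_or_odd i with he | ho
      · right; right; left
        obtain ⟨r, hr⟩ := he
        exact ⟨i/2 - 1, by omega, by omega⟩
      · right; left
        obtain ⟨r, hr⟩ := ho
        exact ⟨i/2, by omega, by omega⟩
    rcases Nat.eq_or_lt_of_le h2 with h3 | h3
    · right; right; right; left; omega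
    · right; right; right; right
      exact ⟨i - (2*k+2), by omega, by omega⟩
  -- range of g
  have hglt : ∀ i, i < m+1 → g i < m+1 := by
    intro i hi
    rcases hform i hi with h0 | ⟨j', hj', hij⟩ | ⟨j', hj', hij⟩ | htop | ⟨m', hm', hij⟩
    · rw [h0, hg0]; omega
    · rw [hij, hgq j' hj']; have := hqvf j' hj'; omega
    · rw [hij, hgw j' hj']; have := hwvf j' hj'; omega
    · rw [htop, hgtop]; omega
    · rw [hij, hgr m' hm']; have := hrvf m' hm'; omega
  -- coincidence helper lemmas
  have hiq : ∀ j1 j2, j1 < k → j2 < k → qv j1 = qv j2 → j1 = j2 := by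
    intro j1 j2 h1 h2 he
    rcases lt_trichotomy j1 j2 with h | h | h
    · exact absurd he (ne_of_lt (hqmono _ _ h h2))
    · exact h
    · exact absurd he.symm (ne_of_lt (hqmono _ _ h h1))
  have hiw : ∀ j1 j2, j1 < k → j2 < k → wv j1 = wv j2 → j1 = j2 := by
    intro j1 j2 h1 h2 he
    rcases lt_trichotomy j1 j2 with h | h | h
    · exact absurd he (ne_of_lt (hwmono _ _ h h2))
    · exact h
    · exact absurd he.symm (ne_of_lt (hwmono _ _ h h1))
  have hir : ∀ m1 m2, m1 < c → m2 < c → rv m1 = rv m2 → m1 = m2 := by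
    intro m1 m2 h1 h2 he
    rcases lt_trichotomy m1 m2 with h | h | h
    · exact absurd he.symm (ne_of_lt (hranti _ _ h h2))
    · exact h
    · exact absurd he (ne_of_lt (hranti _ _ h h1))
  have hqw : ∀ j1 j2, j1 < k → j2 < k → qv j1 ≠ wv j2 := by
    intro j1 j2 h1 h2 he
    have a1 := (hqvf j1 h1).2.2
    have a2 := (hwvf j2 h2).2.2
    rw [he] at a1
    exact (Finset.disjoint_left.mp hQW a1) a2
  have hqr : ∀ j1 m1, j1 < k → m1 < c → qv j1 ≠ rv m1 := by
    intro j1 m1 h1 h2 he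
    have a1 := (hqvf j1 h1).2.2
    have a2 := (hrvf m1 h2).2.2.1
    rw [he] at a1
    exact a2 a1
  have hwr : ∀ j1 m1, j1 < k → m1 < c → wv j1 ≠ rv m1 := by
    intro j1 m1 h1 h2 he
    have a1 := (hwvf j1 h1).2.2
    have a2 := (hrvf m1 h2).2.2.2
    rw [he] at a1
    exact a2 a1
  -- injectivity of g
  have ginj : ∀ i i', i < m+1 → i' < m+1 → g i = g i' → i = i' := by
    intro i i' hi hi' heq
    rcases hform i hi with h0 | ⟨j1, hj1, hij⟩ | ⟨j1, hj1, hij⟩ | htop | ⟨m1, hm1, hij⟩ <;>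
      rcases hform i' hi' with h0' | ⟨j2, hj2, hij'⟩ | ⟨j2, hj2, hij'⟩ | htop' | ⟨m2, hm2, hij'⟩ <;>
      subst_vars
    · rfl
    · rw [hg0, hgq _ hj2] at heq; have := hqvf j2 hj2; omega
    · rw [hg0, hgw _ hj2] at heq; have := hwvf j2 hj2; omega
    · rw [hg0, hgtop] at heq; omega
    · rw [hg0, hgr _ hm2] at heq; have := hrvf m2 hm2; omega
    · rw [hgq _ hj1, hg0] at heq; have := hqvf j1 hj1; omega
    · rw [hgq _ hj1, hgq _ hj2] at heq; have := hiq j1 j2 hj1 hj2 heq; omega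
    · rw [hgq _ hj1, hgw _ hj2] at heq; exact absurd heq (hqw j1 j2 hj1 hj2)
    · rw [hgq _ hj1, hgtop] at heq; have := hqvf j1 hj1; omega
    · rw [hgq _ hj1, hgr _ hm2] at heq; exact absurd heq (hqr j1 m2 hj1 hm2)
    · rw [hgw _ hj1, hg0] at heq; have := hwvf j1 hj1; omega
    · rw [hgw _ hj1, hgq _ hj2] at heq; exact absurd heq.symm (hqw j2 j1 hj2 hj1)
    · rw [hgw _ hj1, hgw _ hj2] at heq; have := hiw j1 j2 hj1 hj2 heq; omega
    · rw [hgw _ hj1, hgtop] at heq; have := hwvf j1 hj1; omega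
    · rw [hgw _ hj1, hgr _ hm2] at heq; exact absurd heq (hwr j1 m2 hj1 hm2)
    · rw [hgtop, hg0] at heq; omega
    · rw [hgtop, hgq _ hj2] at heq; have := hqvf j2 hj2; omega
    · rw [hgtop, hgw _ hj2] at heq; have := hwvf j2 hj2; omega
    · rfl
    · rw [hgtop, hgr _ hm2] at heq; have := hrvf m2 hm2; omega
    · rw [hgr _ hm1, hg0] at heq; have := hrvf m1 hm1; omega
    · rw [hgr _ hm1, hgq _ hj2] at heq; exact absurd heq.symm (hqr j2 m1 hj2 hm1)
    · rw [hgr _ hm1, hgw _ hj2] at heq; exact absurd heq.symm (hwr j2 m1 hj2 hm1)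
    · rw [hgr _ hm1, hgtop] at heq; have := hrvf m1 hm1; omega
    · rw [hgr _ hm1, hgr _ hm2] at heq; have := hir m1 m2 hm1 hm2 heq; omega
  -- neighbour-comparison helper lemmas
  have hqv1 : ∀ ι, ι < k → qv ι + 1 = embFun Q k hQk ι := by
    intro ι hι
    have := hQ2 _ (embFun_mem Q k hQk hι)
    rw [hqvdef]; simp only; omega
  have hwv1 : ∀ ι, ι < k → wv ι + 1 = embFun W k hWk ι := by
    intro ι hι
    have := hW2 _ (embFun_mem W k hWk hι)
    rw [hwvdef]; simp only; omega
  have hgm : 1 ≤ g m := by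
    rcases Nat.eq_zero_or_pos c with hc0 | hc0
    · have h1 : m = 2*k+1 := by omega
      rw [h1, hgtop]; omega
    · have h1 : m = 2*k+2+(c-1) := by omega
      rw [h1, hgr _ (by omega)]
      have := hrvf (c-1) (by omega)
      omega
  have hg1 : 1 ≤ g 1 := by
    rcases Nat.eq_zero_or_pos k with hk0 | hk0
    · have h1 : (1:ℕ) = 2*k+1 := by omega
      rw [h1, hgtop]; omega
    · have h1 : (1:ℕ) = 2*0+1 := by omega
      rw [h1, hgq 0 hk0]
      have := hqvf 0 hk0
      omega
  have hprevq : ∀ ι, ι < k → g (2*ι) < qv ι := by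
    intro ι hι
    rcases Nat.eq_zero_or_pos ι with h | h
    · subst h
      simp only [Nat.mul_zero]
      rw [hg0]
      have := hqvf 0 hι
      omega
    · have e : 2*ι = 2*(ι-1)+2 := by omega
      rw [e, hgw _ (by omega)]
      have h1 := hwq (ι-1) (by omega)
      have h2 := hqmono (ι-1) ι (by omega) hι
      omega
  have hnextw : ∀ ι, ι < k → wv ι < g (2*ι+3) := by
    intro ι hι
    rcases Nat.lt_or_ge (ι+1) k with h | h
    · have e : 2*ι+3 = 2*(ι+1)+1 := by omega
      rw [e, hgq _ h]
      have h1 := hwq ι hι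
      have h2 := hqmono ι (ι+1) (by omega) h
      omega
    · have e : 2*ι+3 = 2*k+1 := by omega
      rw [e, hgtop]
      have := hwvf ι hι
      omega
  -- the permutation
  have hglt' : ∀ i : Fin (m+1), g i.val < m+1 := fun i => hglt i.val i.isLt
  set F : Fin (m+1) → Fin (m+1) := fun i => ⟨g i.val, hglt' i⟩ with hFdef
  have hFinj : Function.Injective F := by
    intro a b hab
    have h1 : g a.val = g b.val := congrArg Fin.val hab
    exact Fin.ext (ginj a.val b.val a.isLt b.isLt h1)
  have hFbij : Function.Bijective F := Finite.injective_iff_bijective.mp hFinj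
  set σ : Equiv.Perm (Fin (m+1)) := Equiv.ofBijective F hFbij with hσdef
  have hσval : ∀ i : Fin (m+1), (σ i).val = g i.val := fun i => rfl
  have hrotsymm : ∀ i : Fin (m+1), (finRotate (m+1)).symm i = i - 1 := by
    intro i; rw [Equiv.symm_apply_eq, finRotate_succ_apply, sub_add_cancel]
  have hprev : ∀ i : Fin (m+1), (σ ((finRotate (m+1)).symm i)).val
      = g (if i.val = 0 then m else i.val - 1) := by
    intro i
    rw [hrotsymm, hσval]
    congr 1
    rw [Fin.coe_sub_one]
    by_cases h : i = 0
    · rw [if_pos h, if_pos (by rw [h]; rfl)]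
    · have h0 : ¬ (i.val = 0) := by
        intro hc
        exact h (Fin.ext (by simpa using hc))
      rw [if_neg h, if_neg h0]
  have hnext : ∀ i : Fin (m+1), (σ (finRotate (m+1) i)).val
      = g (if i.val = m then 0 else i.val + 1) := by
    intro i
    rw [finRotate_succ_apply, hσval]
    congr 1
    rw [Fin.val_add_one]
    by_cases h : i = Fin.last m
    · rw [if_pos h, if_pos (by rw [h]; rfl)]
    · have h0 : ¬ (i.val = m) := by
        intro hc
        exact h (Fin.ext (by simpa using hc))
      rw [if_neg h, if_neg h0]
  have hcondP : ∀ i : Fin (m+1),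
      ((σ ((finRotate (m+1)).symm i) < σ i ∧ σ (finRotate (m+1) i) < σ i) ↔
      (g (if i.val = 0 then m else i.val - 1) < g i.val ∧
        g (if i.val = m then 0 else i.val + 1) < g i.val)) := by
    intro i
    rw [Fin.lt_def, Fin.lt_def, hprev, hnext, hσval]
  have hcondV : ∀ i : Fin (m+1),
      ((σ i < σ ((finRotate (m+1)).symm i) ∧ σ i < σ (finRotate (m+1) i)) ↔
      (g i.val < g (if i.val = 0 then m else i.val - 1) ∧
        g i.val < g (if i.val = m then 0 else i.val + 1))) := by
    intro i
    rw [Fin.lt_def, Fin.lt_def, hprev, hnext, hσval]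
  refine ⟨σ, ?_, ?_⟩
  · -- pinnacleSet = Q ∪ {m+1}
    ext a
    simp only [pinnacleSet, Finset.mem_image, Finset.mem_filter, Finset.mem_univ, true_and,
      Finset.mem_union, Finset.mem_singleton]
    constructor
    · rintro ⟨i, hcond, rfl⟩
      rw [hcondP i] at hcond
      rw [hσval]
      rcases hform i.val i.isLt with h0 | ⟨j1, hj1, hij⟩ | ⟨j1, hj1, hij⟩ | htop | ⟨m1, hm1, hij⟩
      · exfalso
        rw [h0, hg0] at hcond
        omega
      · left
        rw [hij, hgq _ hj1, hqv1 j1 hj1]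
        exact embFun_mem Q k hQk hj1
      · exfalso
        rw [hij] at hcond
        rw [if_neg (by omega)] at hcond
        have e1 : 2*j1+2-1 = 2*j1+1 := by omega
        rw [e1, hgq _ hj1, hgw _ hj1] at hcond
        have := hwq j1 hj1
        omega
      · right
        rw [htop, hgtop]
      · exfalso
        rw [hij] at hcond
        rw [if_neg (by omega)] at hcond
        rcases Nat.eq_zero_or_pos m1 with h1 | h1
        · subst h1
          have e1 : 2*k+2+0-1 = 2*k+1 := by omega
          rw [e1, hgtop, hgr _ hm1] at hcond
          have := hrvf 0 hm1
          omega
        · have e1 : 2*k+2+m1-1 = 2*k+2+(m1-1) := by omega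
          rw [e1, hgr _ (by omega), hgr _ hm1] at hcond
          have hx : 2*k+2+(m1-1) - (2*k+2) = m1 - 1 := by omega
          have := hranti (m1-1) m1 (by omega) hm1
          omega
    · intro ha
      rcases ha with haQ | ham
      · obtain ⟨ι, hι, hιa⟩ := embFun_surj Q k hQk haQ
        have h2k : 2*ι+1 < m+1 := by omega
        refine ⟨⟨2*ι+1, h2k⟩, ?_, ?_⟩
        · rw [hcondP]
          constructor
          · show g (if 2*ι+1 = 0 then m else 2*ι+1-1) < g (2*ι+1)
            rw [if_neg (by omega)]
            have e1 : 2*ι+1-1 = 2*ι := by omega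
            rw [e1, hgq _ hι]
            exact hprevq ι hι
          · show g (if 2*ι+1 = m then 0 else 2*ι+1+1) < g (2*ι+1)
            rw [if_neg (by omega)]
            have e1 : 2*ι+1+1 = 2*ι+2 := by omega
            rw [e1, hgq _ hι, hgw _ hι]
            exact hwq ι hι
        · show g (2*ι+1) + 1 = a
          rw [hgq _ hι, hqv1 ι hι, hιa]
      · subst ham
        have h2k : 2*k+1 < m+1 := by omega
        refine ⟨⟨2*k+1, h2k⟩, ?_, ?_⟩
        · rw [hcondP]
          constructor
          · show g (if 2*k+1 = 0 then m else 2*k+1-1) < g (2*k+1)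
            rw [if_neg (by omega), hgtop]
            rcases Nat.eq_zero_or_pos k with hk0 | hk0
            · have e1 : 2*k+1-1 = 0 := by omega
              rw [e1, hg0]; omega
            · have e1 : 2*k+1-1 = 2*(k-1)+2 := by omega
              rw [e1, hgw _ (by omega)]
              have := hwvf (k-1) (by omega)
              omega
          · show g (if 2*k+1 = m then 0 else 2*k+1+1) < g (2*k+1)
            rw [hgtop]
            by_cases hcm : 2*k+1 = m
            · rw [if_pos hcm, hg0]; omega
            · rw [if_neg hcm]
              have hc0 : 0 < c := by omega
              have e1 : 2*k+1+1 = 2*k+2+0 := by omega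
              rw [e1, hgr _ hc0]
              have := hrvf 0 hc0
              omega
        · show g (2*k+1) + 1 = m + 1
          rw [hgtop]
  · -- valeSet = W ∪ {1}
    ext a
    simp only [valeSet, Finset.mem_image, Finset.mem_filter, Finset.mem_univ, true_and,
      Finset.mem_union, Finset.mem_singleton]
    constructor
    · rintro ⟨i, hcond, rfl⟩
      rw [hcondV i] at hcond
      rw [hσval]
      rcases hform i.val i.isLt with h0 | ⟨j1, hj1, hij⟩ | ⟨j1, hj1, hij⟩ | htop | ⟨m1, hm1, hij⟩
      · right
        rw [h0, hg0]
      · exfalso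
        rw [hij] at hcond
        rw [if_neg (show ¬ (2*j1+1 = m) by omega)] at hcond
        have e1 : 2*j1+1+1 = 2*j1+2 := by omega
        rw [e1, hgq _ hj1, hgw _ hj1] at hcond
        have := hwq j1 hj1
        omega
      · left
        rw [hij, hgw _ hj1, hwv1 j1 hj1]
        exact embFun_mem W k hWk hj1
      · exfalso
        rw [htop, hgtop] at hcond
        by_cases hcm : 2*k+1 = m
        · rw [if_pos hcm, hg0] at hcond
          omega
        · rw [if_neg hcm] at hcond
          have hc0 : 0 < c := by omega
          have e1 : 2*k+1+1 = 2*k+2+0 := by omega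
          rw [e1, hgr _ hc0] at hcond
          have := hrvf 0 hc0
          omega
      · exfalso
        rw [hij] at hcond
        rw [hgr _ hm1] at hcond
        by_cases hcm : 2*k+2+m1 = m
        · rw [if_pos hcm, hg0] at hcond
          omega
        · rw [if_neg hcm] at hcond
          have hm1' : m1 + 1 < c := by omega
          have e1 : 2*k+2+m1+1 = 2*k+2+(m1+1) := by omega
          rw [e1, hgr _ hm1'] at hcond
          have := hranti m1 (m1+1) (by omega) hm1'
          omega
    · intro ha
      rcases ha with haW | ha1
      · obtain ⟨ι, hι, hιa⟩ := embFun_surj W k hWk haW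
        have h2k : 2*ι+2 < m+1 := by omega
        refine ⟨⟨2*ι+2, h2k⟩, ?_, ?_⟩
        · rw [hcondV]
          constructor
          · show g (2*ι+2) < g (if 2*ι+2 = 0 then m else 2*ι+2-1)
            rw [if_neg (by omega)]
            have e1 : 2*ι+2-1 = 2*ι+1 := by omega
            rw [e1, hgq _ hι, hgw _ hι]
            exact hwq ι hι
          · show g (2*ι+2) < g (if 2*ι+2 = m then 0 else 2*ι+2+1)
            rw [if_neg (by omega)]
            have e1 : 2*ι+2+1 = 2*ι+3 := by omega
            rw [e1, hgw _ hι]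
            exact hnextw ι hι
        · show g (2*ι+2) + 1 = a
          rw [hgw _ hι, hwv1 ι hι, hιa]
      · subst ha1
        refine ⟨⟨0, by omega⟩, ?_, ?_⟩
        · rw [hcondV]
          constructor
          · show g 0 < g (if (0:ℕ) = 0 then m else 0-1)
            rw [if_pos rfl, hg0]
            omega
          · show g 0 < g (if (0:ℕ) = m then 0 else 0+1)
            rw [if_neg (by omega), hg0]
            have e1 : (0:ℕ)+1 = 1 := by omega
            rw [e1]
            omega
        · show g 0 + 1 = 1
          rw [hg0]


/-- Admissibility criterion: a pair `(Q, W)` of disjoint `k`-element subsets of `ℤ_{≥2}`,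
with increasing enumerations `q_1 < ⋯ < q_k` and `w_1 < ⋯ < w_k`, is realizable as
the pinnacle set `Q ∪ {n}` and vale set `W ∪ {1}` of some circular `n`-permutation with
`n > max Q`, if and only if `q_j > w_j` for all `j`. -/
theorem admissible_iff (k : ℕ) (Q W : Finset ℕ)
    (hQW : Disjoint Q W) (hQ2 : ∀ q ∈ Q, 2 ≤ q) (hW2 : ∀ w ∈ W, 2 ≤ w)
    (hQk : Q.card = k) (hWk : W.card = k) :
    (∃ n : ℕ, (∀ q ∈ Q, q < n) ∧
        ∃ σ : Equiv.Perm (Fin n),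
          pinnacleSet n σ = Q ∪ {n} ∧ valeSet n σ = W ∪ {1})
      ↔ ∀ j : Fin k, W.orderEmbOfFin hWk j < Q.orderEmbOfFin hQk j := by
  constructor
  · rintro ⟨n, hq, σ, hP, hV⟩ j
    exact forward k Q W hQW hQ2 hW2 hQk hWk n hq σ hP hV j
  · intro h
    have hm : 1 ≤ max 1 (Q.sup id) := le_max_left _ _
    set m := max 1 (Q.sup id) with hmdef
    have hQm : ∀ q ∈ Q, q ≤ m := fun q hq =>
      le_trans (Finset.le_sup (f := id) hq) (le_max_right _ _)
    have hlt : ∀ ι, ι < k → embFun W k hWk ι < embFun Q k hQk ι := by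
      intro ι hι
      have := h ⟨ι, hι⟩
      rwa [← embFun_fin Q k hQk ⟨ι, hι⟩, ← embFun_fin W k hWk ⟨ι, hι⟩] at this
    have hWm : ∀ w ∈ W, w ≤ m := by
      intro w hw
      obtain ⟨ι, hι, hιw⟩ := embFun_surj W k hWk hw
      have h1 := hlt ι hι
      have h2 := hQm _ (embFun_mem Q k hQk hι)
      omega
    obtain ⟨σ, hP, hV⟩ := construction k Q W hQW hQ2 hW2 hQk hWk hlt m hm hQm hWm
    exact ⟨m+1, fun q hq => by have := hQm q hq; omega, σ, hP, hV⟩
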